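/- Let b > 0 and let W : [−b,b] × [−b,b] → ℝ be bounded measurable with W ≥ 0. For every real q and every twice continuously differentiable u : [−b,b]² → ℂ vanishing on the boundary of the square, setting f := −Δu + i q W u − q² u (with Δu = ∂²u/∂x² + ∂²u/∂y²), one has |q| · ∫∫_{[−b,b]²} W |u|² dx dy ≤ ‖f‖_{L²([−b,b]²)} · ‖u‖_{L²([−b,b]²)}. Consequently, for every ε > 0 and every measurable set E ⊆ [−b,b]² on which W ≥ ε, one has ε·|q|·∫∫_E |u|² dx dy ≤ ‖f‖_{L²([−b,b]²)}·‖u‖_{L²([−b,b]²)}. -/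

import Mathlib

open MeasureTheory Set



/-- 1D integration by parts giving zero boundary terms. -/
lemma my_ibp_zero (b : ℝ) (hb : 0 < b) (v v' w w' : ℝ → ℂ)
    (hv : ∀ x ∈ Icc (-b) b, HasDerivWithinAt v (v' x) (Icc (-b) b) x)
    (hw : ∀ x ∈ Icc (-b) b, HasDerivWithinAt w (w' x) (Icc (-b) b) x)
    (hvc : ContinuousOn v (Icc (-b) b)) (hwc : ContinuousOn w (Icc (-b) b))
    (hv'c : ContinuousOn v' (Icc (-b) b)) (hw'c : ContinuousOn w' (Icc (-b) b))
    (hwa : w (-b) = 0) (hwb : w b = 0) :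
    ∫ x in Icc (-b) b,
      (v' x * starRingEnd ℂ (w x) + v x * starRingEnd ℂ (w' x)) = 0 := by
  have hab : (-b : ℝ) ≤ b := by linarith
  set F : ℝ → ℂ := fun x => v x * starRingEnd ℂ (w x) with hF
  set F' : ℝ → ℂ := fun x => v' x * starRingEnd ℂ (w x) + v x * starRingEnd ℂ (w' x) with hF'
  have hcont : ContinuousOn F (Icc (-b) b) := hvc.mul hwc.star
  have hcont' : ContinuousOn F' (Icc (-b) b) :=
    (hv'c.mul hwc.star).add (hvc.mul hw'c.star)
  have hderiv : ∀ x ∈ Ioo (-b) b, HasDerivWithinAt F (F' x) (Ioi x) x := by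
    intro x hx
    have hmem : x ∈ Icc (-b) b := Ioo_subset_Icc_self hx
    have hnhds : Icc (-b) b ∈ nhds x := Icc_mem_nhds hx.1 hx.2
    have hvd : HasDerivAt v (v' x) x := (hv x hmem).hasDerivAt hnhds
    have hwd : HasDerivAt w (w' x) x := (hw x hmem).hasDerivAt hnhds
    have hwds : HasDerivAt (fun y => starRingEnd ℂ (w y)) (starRingEnd ℂ (w' x)) x := by
      have := hwd.star
      simp only [starRingEnd_apply]
      exact this
    exact (hvd.mul hwds).hasDerivWithinAt
  have hint : IntervalIntegrable F' volume (-b) b := by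
    apply ContinuousOn.intervalIntegrable
    rwa [uIcc_of_le hab]
  have key : ∫ x in (-b)..b, F' x = F b - F (-b) :=
    intervalIntegral.integral_eq_sub_of_hasDeriv_right_of_le hab hcont hderiv hint
  have hz : F b - F (-b) = 0 := by simp [hF, hwa, hwb]
  rw [hz] at key
  rw [intervalIntegral.integral_of_le hab] at key
  rw [MeasureTheory.integral_Icc_eq_integral_Ioc]
  exact key

/-- Fubini in the symmetric order for set integrals on ℝ × ℝ. -/
lemma my_setIntegral_prod_symm {E : Type*} [NormedAddCommGroup E] [NormedSpace ℝ E]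
    (f : ℝ × ℝ → E) {s t : Set ℝ} (hf : IntegrableOn f (s ×ˢ t)) :
    ∫ z in s ×ˢ t, f z = ∫ y in t, ∫ x in s, f (x, y) := by
  rw [Measure.volume_eq_prod, ← Measure.prod_restrict]
  rw [Measure.volume_eq_prod] at hf
  rw [IntegrableOn, ← Measure.prod_restrict] at hf
  exact integral_prod_symm f hf

lemma my_setIntegral_prod {E : Type*} [NormedAddCommGroup E] [NormedSpace ℝ E]
    (f : ℝ × ℝ → E) {s t : Set ℝ} (hf : IntegrableOn f (s ×ˢ t)) :
    ∫ z in s ×ˢ t, f z = ∫ x in s, ∫ y in t, f (x, y) := by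
  rw [Measure.volume_eq_prod]
  rw [Measure.volume_eq_prod] at hf
  exact setIntegral_prod f hf


/-- Pairing estimate: for the stationary damped wave operator on the square `[-b,b]²` with
nonnegative bounded measurable damping `W` and `u` twice continuously differentiable
vanishing on the boundary, setting `f = -Δu + iqWu - q²u`,
`|q| ∫∫ W|u|² ≤ ‖f‖_{L²} ‖u‖_{L²}`; consequently on any measurable set `E` where `W ≥ ε`,
`ε |q| ∫∫_E |u|² ≤ ‖f‖_{L²} ‖u‖_{L²}`. -/
theorem stmt_19 (b : ℝ) (hb : 0 < b)
    (W : ℝ × ℝ → ℝ) (hWmeas : Measurable W) (hWbdd : ∃ M : ℝ, ∀ p : ℝ × ℝ, |W p| ≤ M)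
    (hWpos : ∀ p : ℝ × ℝ, 0 ≤ W p)
    (q : ℝ) (u ux uy uxx uyy : ℝ × ℝ → ℂ)
    (hux : ∀ p ∈ Icc (-b) b ×ˢ Icc (-b) b,
      HasDerivWithinAt (fun s => u (s, p.2)) (ux p) (Icc (-b) b) p.1)
    (huxx : ∀ p ∈ Icc (-b) b ×ˢ Icc (-b) b,
      HasDerivWithinAt (fun s => ux (s, p.2)) (uxx p) (Icc (-b) b) p.1)
    (huy : ∀ p ∈ Icc (-b) b ×ˢ Icc (-b) b,
      HasDerivWithinAt (fun t => u (p.1, t)) (uy p) (Icc (-b) b) p.2)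
    (huyy : ∀ p ∈ Icc (-b) b ×ˢ Icc (-b) b,
      HasDerivWithinAt (fun t => uy (p.1, t)) (uyy p) (Icc (-b) b) p.2)
    (hu : ContinuousOn u (Icc (-b) b ×ˢ Icc (-b) b))
    (hux' : ContinuousOn ux (Icc (-b) b ×ˢ Icc (-b) b))
    (huy' : ContinuousOn uy (Icc (-b) b ×ˢ Icc (-b) b))
    (huxx' : ContinuousOn uxx (Icc (-b) b ×ˢ Icc (-b) b))
    (huyy' : ContinuousOn uyy (Icc (-b) b ×ˢ Icc (-b) b))
    (hbdry : ∀ p ∈ Icc (-b) b ×ˢ Icc (-b) b, (|p.1| = b ∨ |p.2| = b) → u p = 0) :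
    |q| * ∫ p in Icc (-b) b ×ˢ Icc (-b) b, W p * ‖u p‖ ^ 2
      ≤ Real.sqrt (∫ p in Icc (-b) b ×ˢ Icc (-b) b,
            ‖-(uxx p + uyy p) + Complex.I * (q : ℂ) * ((W p : ℝ) : ℂ) * u p
              - (q : ℂ) ^ 2 * u p‖ ^ 2)
          * Real.sqrt (∫ p in Icc (-b) b ×ˢ Icc (-b) b, ‖u p‖ ^ 2) ∧
    ∀ ε : ℝ, 0 < ε → ∀ E : Set (ℝ × ℝ), MeasurableSet E → E ⊆ Icc (-b) b ×ˢ Icc (-b) b →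
      (∀ p ∈ E, ε ≤ W p) →
      ε * |q| * ∫ p in E, ‖u p‖ ^ 2
        ≤ Real.sqrt (∫ p in Icc (-b) b ×ˢ Icc (-b) b,
              ‖-(uxx p + uyy p) + Complex.I * (q : ℂ) * ((W p : ℝ) : ℂ) * u p
                - (q : ℂ) ^ 2 * u p‖ ^ 2)
            * Real.sqrt (∫ p in Icc (-b) b ×ˢ Icc (-b) b, ‖u p‖ ^ 2) := by
  obtain ⟨M, hM⟩ := hWbdd
  have hM0 : 0 ≤ M := le_trans (abs_nonneg _) (hM (0, 0))
  have hab : (-b : ℝ) ≤ b := by linarith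
  set Q : Set (ℝ × ℝ) := Icc (-b) b ×ˢ Icc (-b) b with hQdef
  have hQm : MeasurableSet Q := measurableSet_Icc.prod measurableSet_Icc
  have hQc : IsCompact Q := isCompact_Icc.prod isCompact_Icc
  haveI : Fact ((volume : Measure (ℝ × ℝ)) Q < ⊤) := ⟨hQc.measure_lt_top⟩
  set cu : ℝ × ℝ → ℂ := fun p => starRingEnd ℂ (u p) with hcudef
  have hcu : ContinuousOn cu Q := hu.star
  set fC : ℝ × ℝ → ℂ := fun p =>
    -(uxx p + uyy p) + Complex.I * (q : ℂ) * ((W p : ℝ) : ℂ) * u p - (q : ℂ) ^ 2 * u p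
    with hfCdef
  -- basic integrability
  have hInt_u2 : IntegrableOn (fun p => ‖u p‖ ^ 2) Q := ((hu.norm).pow 2).integrableOn_compact hQc
  have hInt_Wu2 : IntegrableOn (fun p => W p * ‖u p‖ ^ 2) Q :=
    hInt_u2.bdd_mul hWmeas.aestronglyMeasurable (ae_of_all _ fun p => by simpa using hM p)
  -- integrability of the complex pieces
  have hIntA : IntegrableOn
      (fun p => ux p * starRingEnd ℂ (ux p) + uy p * starRingEnd ℂ (uy p)) Q :=
    ((hux'.mul hux'.star).add (huy'.mul huy'.star)).integrableOn_compact hQc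
  have hIntBx : IntegrableOn (fun p => uxx p * cu p + ux p * starRingEnd ℂ (ux p)) Q :=
    ((huxx'.mul hcu).add (hux'.mul hux'.star)).integrableOn_compact hQc
  have hIntBy : IntegrableOn (fun p => uyy p * cu p + uy p * starRingEnd ℂ (uy p)) Q :=
    ((huyy'.mul hcu).add (huy'.mul huy'.star)).integrableOn_compact hQc
  -- the two integration-by-parts identities
  have hx : ∫ p in Q, (uxx p * cu p + ux p * starRingEnd ℂ (ux p)) = 0 := by
    rw [hQdef, my_setIntegral_prod_symm _ (hQdef ▸ hIntBx)]
    have hzero : ∀ y ∈ Icc (-b) b,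
        (∫ x in Icc (-b) b,
          (uxx (x, y) * cu (x, y) + ux (x, y) * starRingEnd ℂ (ux (x, y)))) = 0 := by
      intro y hy
      have hmapx : ∀ x ∈ Icc (-b) b, ((x : ℝ), y) ∈ Q := fun x hx => ⟨hx, hy⟩
      have hcx : Continuous fun x : ℝ => ((x : ℝ), y) := continuous_id.prodMk continuous_const
      exact my_ibp_zero b hb (fun x => ux (x, y)) (fun x => uxx (x, y))
        (fun x => u (x, y)) (fun x => ux (x, y))
        (fun x hx => huxx (x, y) (hmapx x hx))
        (fun x hx => hux (x, y) (hmapx x hx))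
        (hux'.comp hcx.continuousOn hmapx)
        (hu.comp hcx.continuousOn hmapx)
        (huxx'.comp hcx.continuousOn hmapx)
        (hux'.comp hcx.continuousOn hmapx)
        (hbdry (-b, y) ⟨left_mem_Icc.2 hab, hy⟩ (Or.inl (by rw [abs_neg]; exact abs_of_pos hb)))
        (hbdry (b, y) ⟨right_mem_Icc.2 hab, hy⟩ (Or.inl (abs_of_pos hb)))
    rw [setIntegral_congr_fun measurableSet_Icc hzero]
    simp
  have hy : ∫ p in Q, (uyy p * cu p + uy p * starRingEnd ℂ (uy p)) = 0 := by
    rw [hQdef, my_setIntegral_prod _ (hQdef ▸ hIntBy)]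
    have hzero : ∀ x ∈ Icc (-b) b,
        (∫ y in Icc (-b) b,
          (uyy (x, y) * cu (x, y) + uy (x, y) * starRingEnd ℂ (uy (x, y)))) = 0 := by
      intro x hx
      have hmapy : ∀ y ∈ Icc (-b) b, ((x : ℝ), y) ∈ Q := fun y hy => ⟨hx, hy⟩
      have hcy : Continuous fun y : ℝ => ((x : ℝ), y) := continuous_const.prodMk continuous_id
      exact my_ibp_zero b hb (fun y => uy (x, y)) (fun y => uyy (x, y))
        (fun y => u (x, y)) (fun y => uy (x, y))
        (fun y hy => huyy (x, y) (hmapy y hy))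
        (fun y hy => huy (x, y) (hmapy y hy))
        (huy'.comp hcy.continuousOn hmapy)
        (hu.comp hcy.continuousOn hmapy)
        (huyy'.comp hcy.continuousOn hmapy)
        (huy'.comp hcy.continuousOn hmapy)
        (hbdry (x, -b) ⟨hx, left_mem_Icc.2 hab⟩ (Or.inr (by rw [abs_neg]; exact abs_of_pos hb)))
        (hbdry (x, b) ⟨hx, right_mem_Icc.2 hab⟩ (Or.inr (abs_of_pos hb)))
    rw [setIntegral_congr_fun measurableSet_Icc hzero]
    simp
  have hInt1 : IntegrableOn (fun p => (-(uxx p + uyy p)) * cu p) Q :=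
    (((huxx'.add huyy').neg).mul hcu).integrableOn_compact hQc
  have hInt2 : IntegrableOn (fun p => (Complex.I * (q : ℂ) * ((W p : ℝ) : ℂ) * u p) * cu p) Q := by
    have hg : IntegrableOn (fun p => u p * cu p) Q := (hu.mul hcu).integrableOn_compact hQc
    have := hg.bdd_mul (c := ‖Complex.I * (q : ℂ)‖ * M)
      (((Complex.measurable_ofReal.comp hWmeas).aestronglyMeasurable).const_mul
        (Complex.I * (q : ℂ)))
      (ae_of_all _ fun p => by
        rw [norm_mul]
        exact mul_le_mul_of_nonneg_left (by simpa using hM p) (norm_nonneg _))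
    exact IntegrableOn.congr_fun this (fun p _ => by simp [Function.comp, mul_assoc]) hQm
  have hInt3 : IntegrableOn (fun p => ((q : ℂ) ^ 2 * u p) * cu p) Q :=
    (((hu.mul hcu)).const_smul ((q : ℂ) ^ 2)).integrableOn_compact hQc |>.congr_fun
      (fun p _ => by simp [smul_eq_mul, mul_assoc]) hQm
  -- pointwise: u * conj u is the squared norm
  have hmc : ∀ p : ℝ × ℝ, u p * cu p = ((‖u p‖ ^ 2 : ℝ) : ℂ) := by
    intro p
    rw [hcudef]
    simp [Complex.mul_conj, Complex.normSq_eq_norm_sq]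
  have cim : ∀ {g : ℝ × ℝ → ℂ}, IntegrableOn g Q →
      (∫ p in Q, (g p).im) = (∫ p in Q, g p).im := by
    intro g hg
    rw [← RCLike.im_eq_complex_im]
    exact integral_im hg
  -- the pairing integral and its imaginary part
  set F : ℂ := ∫ p in Q, fC p * cu p with hFdef
  have hsplit : F = (∫ p in Q, (-(uxx p + uyy p)) * cu p)
      + (∫ p in Q, (Complex.I * (q : ℂ) * ((W p : ℝ) : ℂ) * u p) * cu p)
      - (∫ p in Q, ((q : ℂ) ^ 2 * u p) * cu p) := by
    have h12 : IntegrableOn (fun p =>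
        (-(uxx p + uyy p)) * cu p + (Complex.I * (q : ℂ) * ((W p : ℝ) : ℂ) * u p) * cu p) Q :=
      hInt1.add hInt2
    rw [hFdef, setIntegral_congr_fun hQm (fun p _ => by rw [hfCdef]; ring :
      EqOn (fun p => fC p * cu p) (fun p =>
        ((-(uxx p + uyy p)) * cu p + (Complex.I * (q : ℂ) * ((W p : ℝ) : ℂ) * u p) * cu p)
          - ((q : ℂ) ^ 2 * u p) * cu p) Q),
      integral_sub h12 hInt3, integral_add hInt1 hInt2]
  have hT1 : (∫ p in Q, (-(uxx p + uyy p)) * cu p)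
      = ∫ p in Q, (ux p * starRingEnd ℂ (ux p) + uy p * starRingEnd ℂ (uy p)) := by
    rw [setIntegral_congr_fun hQm (fun p _ => by rw [hcudef]; ring :
      EqOn (fun p => (-(uxx p + uyy p)) * cu p) (fun p =>
        ((ux p * starRingEnd ℂ (ux p) + uy p * starRingEnd ℂ (uy p))
          - (uxx p * cu p + ux p * starRingEnd ℂ (ux p)))
          - (uyy p * cu p + uy p * starRingEnd ℂ (uy p))) Q)]
    have hAB : IntegrableOn (fun p =>
        (ux p * starRingEnd ℂ (ux p) + uy p * starRingEnd ℂ (uy p))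
          - (uxx p * cu p + ux p * starRingEnd ℂ (ux p))) Q := hIntA.sub hIntBx
    rw [integral_sub hAB hIntBy, integral_sub hIntA hIntBx, hx, hy]
    ring
  have hT1im : (∫ p in Q, (-(uxx p + uyy p)) * cu p).im = 0 := by
    rw [hT1, ← cim hIntA]
    have hz : ∀ p : ℝ × ℝ,
        (ux p * starRingEnd ℂ (ux p) + uy p * starRingEnd ℂ (uy p)).im = 0 := by
      intro p; simp [Complex.mul_conj]
    simp only [hz, integral_zero]
  have hT2im : (∫ p in Q, (Complex.I * (q : ℂ) * ((W p : ℝ) : ℂ) * u p) * cu p).im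
      = q * ∫ p in Q, W p * ‖u p‖ ^ 2 := by
    rw [← cim hInt2]
    have hpt : ∀ p : ℝ × ℝ,
        ((Complex.I * (q : ℂ) * ((W p : ℝ) : ℂ) * u p) * cu p).im
          = q * (W p * ‖u p‖ ^ 2) := by
      intro p
      have h1 : (Complex.I * (q : ℂ) * ((W p : ℝ) : ℂ) * u p) * cu p
          = Complex.I * (q : ℂ) * ((W p : ℝ) : ℂ) * ((‖u p‖ ^ 2 : ℝ) : ℂ) := by
        rw [mul_assoc, hmc p]
      rw [h1, show Complex.I * (q : ℂ) * ((W p : ℝ) : ℂ) * ((‖u p‖ ^ 2 : ℝ) : ℂ)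
          = Complex.I * ((q * (W p * ‖u p‖ ^ 2) : ℝ) : ℂ) by push_cast; ring]
      simp only [Complex.mul_im, Complex.I_re, Complex.I_im, Complex.ofReal_re,
        Complex.ofReal_im, one_mul, zero_mul, mul_zero, add_zero, zero_add]
    simp_rw [hpt]
    exact integral_const_mul q _
  have hT3im : (∫ p in Q, ((q : ℂ) ^ 2 * u p) * cu p).im = 0 := by
    rw [← cim hInt3]
    have hz : ∀ p : ℝ × ℝ, (((q : ℂ) ^ 2 * u p) * cu p).im = 0 := by
      intro p
      rw [mul_assoc, hmc p, show ((q : ℂ) ^ 2 * ((‖u p‖ ^ 2 : ℝ) : ℂ))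
          = ((q ^ 2 * ‖u p‖ ^ 2 : ℝ) : ℂ) by push_cast; ring]
      simp only [Complex.ofReal_im]
    simp only [hz, integral_zero]
  have hFim : F.im = q * ∫ p in Q, W p * ‖u p‖ ^ 2 := by
    rw [hsplit, Complex.sub_im, Complex.add_im, hT1im, hT2im, hT3im]
    ring
  have hCW : 0 ≤ ∫ p in Q, W p * ‖u p‖ ^ 2 :=
    setIntegral_nonneg hQm fun p _ => mul_nonneg (hWpos p) (by positivity)
  -- |q| CW ≤ ‖F‖
  have habs : |q| * (∫ p in Q, W p * ‖u p‖ ^ 2) ≤ ‖F‖ := by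
    have h1 : |q| * (∫ p in Q, W p * ‖u p‖ ^ 2) = |F.im| := by
      rw [hFim, abs_mul, abs_of_nonneg hCW]
    rw [h1]
    exact Complex.abs_im_le_norm F
  -- ‖F‖ ≤ ∫ ‖fC‖ ‖u‖
  have hnorm : ‖F‖ ≤ ∫ p in Q, ‖fC p‖ * ‖u p‖ := by
    refine le_trans (norm_integral_le_integral_norm _) (le_of_eq ?_)
    refine integral_congr_ae (ae_of_all _ fun p => ?_)
    show ‖fC p * cu p‖ = ‖fC p‖ * ‖u p‖
    rw [norm_mul, hcudef]
    simp [RCLike.norm_conj]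
  -- boundedness of fC on Q
  obtain ⟨C1, hC1⟩ := hQc.exists_bound_of_continuousOn ((huxx'.add huyy').neg)
  obtain ⟨C2, hC2⟩ := hQc.exists_bound_of_continuousOn hu
  have h0Q : ((0 : ℝ), (0 : ℝ)) ∈ Q := by
    have h0 : (0 : ℝ) ∈ Icc (-b) b := mem_Icc.mpr ⟨by linarith, by linarith⟩
    exact ⟨h0, h0⟩
  have hC2nn : 0 ≤ C2 := le_trans (norm_nonneg _) (hC2 _ h0Q)
  have hbound : ∀ p ∈ Q, ‖fC p‖ ≤ C1 + |q| * (M * C2) + q ^ 2 * C2 := by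
    intro p hp
    rw [hfCdef]
    have hc : ‖Complex.I * (q : ℂ) * ((W p : ℝ) : ℂ) * u p‖ = |q| * (|W p| * ‖u p‖) := by
      simp [norm_mul, abs_mul]
      ring
    have hc2 : |q| * (|W p| * ‖u p‖) ≤ |q| * (M * C2) :=
      mul_le_mul_of_nonneg_left
        (mul_le_mul (hM p) (hC2 p hp) (norm_nonneg _) hM0) (abs_nonneg q)
    have hd : ‖(q : ℂ) ^ 2 * u p‖ ≤ q ^ 2 * C2 := by
      rw [norm_mul]
      have hq2 : ‖(q : ℂ) ^ 2‖ = q ^ 2 := by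
        rw [norm_pow]
        simp [sq_abs]
      rw [hq2]
      exact mul_le_mul_of_nonneg_left (hC2 p hp) (sq_nonneg q)
    have hadd := norm_add_le (-(uxx p + uyy p)) (Complex.I * (q : ℂ) * ((W p : ℝ) : ℂ) * u p)
    calc ‖(-(uxx p + uyy p) + Complex.I * (q : ℂ) * ((W p : ℝ) : ℂ) * u p
            - (q : ℂ) ^ 2 * u p)‖
        ≤ ‖(-(uxx p + uyy p) + Complex.I * (q : ℂ) * ((W p : ℝ) : ℂ) * u p)‖
            + ‖(q : ℂ) ^ 2 * u p‖ := norm_sub_le _ _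
      _ ≤ ‖(-(uxx p + uyy p))‖ + ‖Complex.I * (q : ℂ) * ((W p : ℝ) : ℂ) * u p‖
            + ‖(q : ℂ) ^ 2 * u p‖ := by linarith
      _ ≤ C1 + |q| * (M * C2) + q ^ 2 * C2 := by
          have : ‖-(uxx p + uyy p)‖ ≤ C1 := hC1 p hp
          rw [hc] at *
          linarith
  -- measurability of fC
  have haesm_u : AEStronglyMeasurable u (volume.restrict Q) := hu.aestronglyMeasurable hQm
  have haesm_fC : AEStronglyMeasurable fC (volume.restrict Q) := by
    rw [hfCdef]
    exact ((((huxx'.add huyy').neg).aestronglyMeasurable hQm).add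
      (((((Complex.measurable_ofReal.comp hWmeas).aestronglyMeasurable).const_mul
        (Complex.I * (q : ℂ))).mul haesm_u))).sub (haesm_u.const_mul ((q : ℂ) ^ 2))
  -- L² membership
  have hmemf : MemLp (fun p => ‖fC p‖) (ENNReal.ofReal 2) (volume.restrict Q) := by
    refine MemLp.of_bound haesm_fC.norm (C1 + |q| * (M * C2) + q ^ 2 * C2) ?_
    filter_upwards [ae_restrict_mem hQm] with p hp
    rw [norm_norm]
    exact hbound p hp
  have hmemu : MemLp (fun p => ‖u p‖) (ENNReal.ofReal 2) (volume.restrict Q) := by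
    refine MemLp.of_bound haesm_u.norm C2 ?_
    filter_upwards [ae_restrict_mem hQm] with p hp
    rw [norm_norm]
    exact hC2 p hp
  -- Cauchy–Schwarz
  have h22 : Real.HolderConjugate 2 2 := Real.HolderConjugate.two_two
  have hHolder := integral_mul_le_Lp_mul_Lq_of_nonneg h22
    (ae_of_all _ fun p : ℝ × ℝ => norm_nonneg (fC p))
    (ae_of_all _ fun p : ℝ × ℝ => norm_nonneg (u p)) hmemf hmemu
  have hrpow : ∀ g : ℝ × ℝ → ℝ, (fun p => g p ^ (2 : ℝ)) = fun p => g p ^ 2 := by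
    intro g
    funext p
    rw [show (2 : ℝ) = ((2 : ℕ) : ℝ) by norm_num, Real.rpow_natCast]
  rw [hrpow (fun p => ‖fC p‖), hrpow (fun p => ‖u p‖)] at hHolder
  rw [show (1 / 2 : ℝ) = (1 / 2 : ℝ) from rfl] at hHolder
  have hsq1 : (∫ p in Q, ‖fC p‖ ^ 2) ^ ((1 : ℝ) / 2)
      = Real.sqrt (∫ p in Q, ‖fC p‖ ^ 2) := (Real.sqrt_eq_rpow _).symm
  have hsq2 : (∫ p in Q, ‖u p‖ ^ 2) ^ ((1 : ℝ) / 2)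
      = Real.sqrt (∫ p in Q, ‖u p‖ ^ 2) := (Real.sqrt_eq_rpow _).symm
  rw [hsq1, hsq2] at hHolder
  -- main estimate
  have main1 : |q| * (∫ p in Q, W p * ‖u p‖ ^ 2)
      ≤ Real.sqrt (∫ p in Q, ‖fC p‖ ^ 2) * Real.sqrt (∫ p in Q, ‖u p‖ ^ 2) :=
    le_trans habs (le_trans hnorm hHolder)
  constructor
  · have := main1
    simp only [hfCdef] at this
    exact this
  · intro ε hε E hEmeas hEsub hEW
    have hIu2E : IntegrableOn (fun p => ‖u p‖ ^ 2) E := hInt_u2.mono_set hEsub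
    have hIW2E : IntegrableOn (fun p => W p * ‖u p‖ ^ 2) E := hInt_Wu2.mono_set hEsub
    have step1 : ε * ∫ p in E, ‖u p‖ ^ 2 ≤ ∫ p in E, W p * ‖u p‖ ^ 2 := by
      rw [← integral_const_mul]
      exact setIntegral_mono_on (hIu2E.const_mul ε) hIW2E hEmeas
        fun p hp => mul_le_mul_of_nonneg_right (hEW p hp) (by positivity)
    have step2 : ∫ p in E, W p * ‖u p‖ ^ 2 ≤ ∫ p in Q, W p * ‖u p‖ ^ 2 :=
      setIntegral_mono_set hInt_Wu2
        (ae_of_all _ fun p => mul_nonneg (hWpos p) (by positivity))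
        (HasSubset.Subset.eventuallyLE hEsub)
    have step3 : |q| * (ε * ∫ p in E, ‖u p‖ ^ 2) ≤ |q| * ∫ p in Q, W p * ‖u p‖ ^ 2 :=
      mul_le_mul_of_nonneg_left (step1.trans step2) (abs_nonneg q)
    have final : ε * |q| * ∫ p in E, ‖u p‖ ^ 2
        ≤ Real.sqrt (∫ p in Q, ‖fC p‖ ^ 2) * Real.sqrt (∫ p in Q, ‖u p‖ ^ 2) := by
      calc ε * |q| * ∫ p in E, ‖u p‖ ^ 2 = |q| * (ε * ∫ p in E, ‖u p‖ ^ 2) := by ring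
        _ ≤ |q| * ∫ p in Q, W p * ‖u p‖ ^ 2 := step3
        _ ≤ _ := main1
    simp only [hfCdef] at final
    exact final
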